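/- arXiv:2010.04937 — 3 statements merged into one kernel-verified Lean document; each statement's English description precedes it below -/
import Mathlib

section
/- Let f be L-smooth and γ-quasar-convex with respect to a global minimizer x*, let R ≥ ‖x₀ − x*‖, and run SGD for T iterations with step sizes α₁, …, α_T all lying in (0, γ/L). Let x̃ be a random iterate equal to x_{t} (for t = 0, …, T−1) with probability proportional to α_{t+1}(γ − L α_{t+1}). Then E[f(x̃) − f(x*)] ≤ R²/(2 ∑_{t=1}^{T} α_t(γ − Lα_t)) + σ² (∑_{t=1}^{T} α_t²)/(∑_{t=1}^{T} α_t(γ − Lα_t)). -/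
open MeasureTheory Finset
open scoped RealInnerProductSpace

private lemma descent_lemma {k : ℕ} (f : EuclideanSpace ℝ (Fin k) → ℝ)
    (f' : EuclideanSpace ℝ (Fin k) → EuclideanSpace ℝ (Fin k)) {L : ℝ} (hL : 0 ≤ L)
    (hgrad : ∀ y, HasGradientAt f (f' y) y)
    (hsmooth : ∀ y z, ‖f' y - f' z‖ ≤ L * ‖y - z‖) (y z : EuclideanSpace ℝ (Fin k)) :
    f z ≤ f y + ⟪f' y, z - y⟫ + L / 2 * ‖z - y‖ ^ 2 := by
  set v := z - y with hv
  have hcontf' : Continuous f' :=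
    (LipschitzWith.of_dist_le_mul (K := ⟨L, hL⟩) fun a b => by
      rw [dist_eq_norm, dist_eq_norm]; exact hsmooth a b).continuous
  have hline : ∀ t : ℝ, HasDerivAt (fun s : ℝ => y + s • v) v t := by
    intro t
    simpa using ((hasDerivAt_id t).smul_const v).const_add y
  have hφ : ∀ t : ℝ, HasDerivAt (fun s => f (y + s • v)) ⟪f' (y + t • v), v⟫ t := by
    intro t
    have h1 := ((hgrad (y + t • v)).hasFDerivAt).comp_hasDerivAt t (hline t)
    simpa [InnerProductSpace.toDual_apply_apply, Function.comp_def] using h1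
  have hcont : Continuous fun t : ℝ => ⟪f' (y + t • v), v⟫ :=
    Continuous.inner (hcontf'.comp (by continuity)) continuous_const
  have heq : f z - f y = ∫ t in (0:ℝ)..1, ⟪f' (y + t • v), v⟫ := by
    rw [intervalIntegral.integral_eq_sub_of_hasDerivAt (fun t _ => hφ t)
      (hcont.intervalIntegrable 0 1)]
    simp [hv]
  have hbound : ∀ t ∈ Set.Icc (0:ℝ) 1,
      ⟪f' (y + t • v), v⟫ ≤ ⟪f' y, v⟫ + (L * ‖v‖ ^ 2) * t := by
    intro t ht
    have h1 : ⟪f' (y + t • v) - f' y, v⟫ ≤ ‖f' (y + t • v) - f' y‖ * ‖v‖ :=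
      real_inner_le_norm _ _
    have h2 : ‖f' (y + t • v) - f' y‖ ≤ L * (t * ‖v‖) := by
      have h3 := hsmooth (y + t • v) y
      simpa [norm_smul, abs_of_nonneg ht.1] using h3
    have h4 : ⟪f' (y + t • v) - f' y, v⟫ = ⟪f' (y + t • v), v⟫ - ⟪f' y, v⟫ :=
      inner_sub_left _ _ _
    nlinarith [norm_nonneg v]
  have hint : (∫ t in (0:ℝ)..1, ⟪f' (y + t • v), v⟫)
      ≤ ∫ t in (0:ℝ)..1, (⟪f' y, v⟫ + (L * ‖v‖ ^ 2) * t) := by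
    refine intervalIntegral.integral_mono_on zero_le_one (hcont.intervalIntegrable 0 1)
      ((continuous_const.add (continuous_const.mul continuous_id)).intervalIntegrable 0 1) hbound
  have hrhs : (∫ t in (0:ℝ)..1, (⟪f' y, v⟫ + (L * ‖v‖ ^ 2) * t))
      = ⟪f' y, v⟫ + L / 2 * ‖v‖ ^ 2 := by
    rw [intervalIntegral.integral_add intervalIntegrable_const
      (by apply Continuous.intervalIntegrable; continuity),
      intervalIntegral.integral_const_mul, integral_id]
    simp
    ring
  linarith [heq, hint, hrhs]

private lemma grad_sq_le {k : ℕ} (f : EuclideanSpace ℝ (Fin k) → ℝ)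
    (f' : EuclideanSpace ℝ (Fin k) → EuclideanSpace ℝ (Fin k)) {L : ℝ} (hL : 0 < L)
    (hgrad : ∀ y, HasGradientAt f (f' y) y)
    (hsmooth : ∀ y z, ‖f' y - f' z‖ ≤ L * ‖y - z‖)
    (xstar : EuclideanSpace ℝ (Fin k)) (hmin : ∀ y, f xstar ≤ f y)
    (y : EuclideanSpace ℝ (Fin k)) :
    ‖f' y‖ ^ 2 ≤ 2 * L * (f y - f xstar) := by
  have h := descent_lemma f f' hL.le hgrad hsmooth y (y - L⁻¹ • f' y)
  have hmin' := hmin (y - L⁻¹ • f' y)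
  have h1 : ⟪f' y, (y - L⁻¹ • f' y) - y⟫ = -(L⁻¹ * ‖f' y‖ ^ 2) := by
    have : (y - L⁻¹ • f' y) - y = -(L⁻¹ • f' y) := by abel
    rw [this, inner_neg_right, real_inner_smul_right, real_inner_self_eq_norm_sq]
  have h2 : ‖(y - L⁻¹ • f' y) - y‖ ^ 2 = L⁻¹ ^ 2 * ‖f' y‖ ^ 2 := by
    have : (y - L⁻¹ • f' y) - y = -(L⁻¹ • f' y) := by abel
    rw [this, norm_neg, norm_smul, mul_pow, Real.norm_eq_abs, sq_abs]
  rw [h1, h2] at h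
  have e : L / 2 * (L⁻¹ ^ 2 * ‖f' y‖ ^ 2) = L⁻¹ * ‖f' y‖ ^ 2 / 2 := by
    field_simp [hL.ne']
  have h3 : L⁻¹ * ‖f' y‖ ^ 2 ≤ 2 * (f y - f xstar) := by linarith
  have h4 := mul_le_mul_of_nonneg_left h3 hL.le
  have e2 : L * (L⁻¹ * ‖f' y‖ ^ 2) = ‖f' y‖ ^ 2 := by field_simp
  linarith


private lemma coord_abs_le_norm {k : ℕ} (v : EuclideanSpace ℝ (Fin k)) (i : Fin k) :
    |v i| ≤ ‖v‖ := by
  have h1 : |v i| ^ 2 ≤ ‖v‖ ^ 2 := by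
    rw [EuclideanSpace.norm_eq, Real.sq_sqrt (by positivity)]
    calc |v i| ^ 2 = ‖v i‖ ^ 2 := by rw [Real.norm_eq_abs]
      _ ≤ ∑ j, ‖v j‖ ^ 2 := Finset.single_le_sum (f := fun j => ‖v j‖ ^ 2) (fun j _ => by positivity) (Finset.mem_univ i)
  calc |v i| = Real.sqrt (|v i| ^ 2) := (Real.sqrt_sq (abs_nonneg _)).symm
    _ ≤ Real.sqrt (‖v‖ ^ 2) := Real.sqrt_le_sqrt h1
    _ = ‖v‖ := Real.sqrt_sq (norm_nonneg _)

private lemma condexp_proj_zero {Ω : Type*} {m : MeasurableSpace Ω} [inst : MeasurableSpace Ω]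
    {P : Measure Ω} [IsProbabilityMeasure P] (hm : m ≤ inst) {k : ℕ}
    {d : Ω → EuclideanSpace ℝ (Fin k)} (hd : Integrable d P)
    (hd0 : MeasureTheory.condExp m P d =ᵐ[P] 0) (i : Fin k) :
    MeasureTheory.condExp m P (fun ω => d ω i) =ᵐ[P] 0 := by
  have hdi : Integrable (fun ω => d ω i) P :=
    (EuclideanSpace.proj (𝕜 := ℝ) i).integrable_comp hd
  refine (ae_eq_condExp_of_forall_setIntegral_eq hm (f := fun ω => d ω i) (g := fun _ => (0:ℝ))
    hdi (fun s _ _ => integrableOn_zero) (fun s hs hμs => ?_) ?_).symm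
  · have h1 : ∫ ω in s, d ω ∂P = 0 := by
      rw [← setIntegral_condExp hm hd hs]
      rw [integral_congr_ae (ae_restrict_of_ae hd0)]
      simp
    have h2 : ∫ ω in s, d ω i ∂P = (EuclideanSpace.proj (𝕜 := ℝ) i) (∫ ω in s, d ω ∂P) :=
      ((EuclideanSpace.proj (𝕜 := ℝ) i).integral_comp_comm hd.integrableOn)
    rw [h2, h1]
    simp
  · exact (@stronglyMeasurable_const Ω ℝ m _ _).aestronglyMeasurable

private lemma integrable_mul_of_sq {Ω : Type*} [MeasurableSpace Ω] {P : Measure Ω}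
    {u v : Ω → ℝ} (hm : AEStronglyMeasurable (fun ω => u ω * v ω) P)
    (hu : Integrable (fun ω => u ω ^ 2) P) (hv : Integrable (fun ω => v ω ^ 2) P) :
    Integrable (fun ω => u ω * v ω) P := by
  refine ((hu.add hv).div_const 2).mono' hm (Filter.Eventually.of_forall fun ω => ?_)
  simp only [Pi.add_apply]
  rw [Real.norm_eq_abs, abs_mul]
  nlinarith [abs_nonneg (u ω), abs_nonneg (v ω), sq_abs (u ω), sq_abs (v ω),
    sq_nonneg (|u ω| - |v ω|)]

private lemma integrable_inner_of_sq {Ω : Type*} [MeasurableSpace Ω] {P : Measure Ω} {k : ℕ}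
    {d h : Ω → EuclideanSpace ℝ (Fin k)}
    (hdm : AEStronglyMeasurable d P) (hhm : AEStronglyMeasurable h P)
    (hd2 : Integrable (fun ω => ‖d ω‖ ^ 2) P) (hh2 : Integrable (fun ω => ‖h ω‖ ^ 2) P) :
    Integrable (fun ω => ⟪d ω, h ω⟫) P := by
  have hn : Integrable (fun ω => ‖d ω‖ * ‖h ω‖) P :=
    integrable_mul_of_sq (hdm.norm.mul hhm.norm) hd2 hh2
  refine hn.mono' (hdm.inner hhm) (Filter.Eventually.of_forall fun ω => ?_)
  rw [Real.norm_eq_abs]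
  exact abs_real_inner_le_norm _ _

private lemma integral_inner_eq_zero {Ω : Type*} {m : MeasurableSpace Ω} [inst : MeasurableSpace Ω]
    {P : Measure Ω} [IsProbabilityMeasure P] (hm : m ≤ inst) {k : ℕ}
    {d h : Ω → EuclideanSpace ℝ (Fin k)}
    (hdm : AEStronglyMeasurable d P) (hhm : StronglyMeasurable[m] h)
    (hdint : Integrable d P)
    (hd2 : Integrable (fun ω => ‖d ω‖ ^ 2) P) (hh2 : Integrable (fun ω => ‖h ω‖ ^ 2) P)
    (hd0 : MeasureTheory.condExp m P d =ᵐ[P] 0) :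
    ∫ ω, ⟪d ω, h ω⟫ ∂P = 0 := by
  have hhm0 : AEStronglyMeasurable h P := ((hhm.mono hm)).aestronglyMeasurable
  have hprod : ∀ i : Fin k, Integrable (fun ω => h ω i * d ω i) P := by
    intro i
    refine ((hd2.add hh2).div_const 2).mono'
      ((((EuclideanSpace.proj (𝕜 := ℝ) i).continuous.comp_aestronglyMeasurable hhm0)).mul
        ((EuclideanSpace.proj (𝕜 := ℝ) i).continuous.comp_aestronglyMeasurable hdm))
      (Filter.Eventually.of_forall fun ω => ?_)
    simp only [Pi.add_apply]
    rw [Real.norm_eq_abs, abs_mul]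
    have h1 := coord_abs_le_norm (h ω) i
    have h2 := coord_abs_le_norm (d ω) i
    nlinarith [abs_nonneg (h ω i), abs_nonneg (d ω i), norm_nonneg (h ω), norm_nonneg (d ω),
      sq_nonneg (‖h ω‖ - ‖d ω‖)]
  have hinner : ∀ ω, ⟪d ω, h ω⟫ = ∑ i, h ω i * d ω i := by
    intro ω
    rw [PiLp.inner_apply]
    exact Finset.sum_congr rfl fun i _ => by simp [RCLike.inner_apply, mul_comm]
  rw [integral_congr_ae (Filter.Eventually.of_forall hinner),
    integral_finset_sum _ fun i _ => hprod i]
  refine Finset.sum_eq_zero fun i _ => ?_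
  have hdi : Integrable (fun ω => d ω i) P :=
    (EuclideanSpace.proj (𝕜 := ℝ) i).integrable_comp hdint
  have hhi : StronglyMeasurable[m] (fun ω => h ω i) :=
    (EuclideanSpace.proj (𝕜 := ℝ) i).continuous.comp_stronglyMeasurable hhm
  have hmul := condExp_mul_of_stronglyMeasurable_left (μ := P) hhi (hprod i) hdi
  have hci := condexp_proj_zero hm hdint hd0 i
  have hzero : MeasureTheory.condExp m P (fun ω => h ω i * d ω i) =ᵐ[P] 0 := by
    refine hmul.trans ?_
    filter_upwards [hci] with ω hω
    simp only [Pi.mul_apply, hω, Pi.zero_apply, mul_zero]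
  rw [← integral_condExp hm]
  exact integral_eq_zero_of_ae hzero

private lemma onestep {Ω : Type*} {m : MeasurableSpace Ω} [inst : MeasurableSpace Ω]
    (P : Measure Ω) [IsProbabilityMeasure P] (hm : m ≤ inst) {k : ℕ}
    (f : EuclideanSpace ℝ (Fin k) → ℝ)
    (f' : EuclideanSpace ℝ (Fin k) → EuclideanSpace ℝ (Fin k))
    (xstar : EuclideanSpace ℝ (Fin k)) {L γ σ a : ℝ}
    (hgrad : ∀ y, HasGradientAt f (f' y) y)
    (hmin : ∀ y, f xstar ≤ f y) (hγ0 : 0 < γ)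
    (hqc : ∀ y, f xstar ≥ f y + (1/γ) * ⟪f' y, xstar - y⟫)
    (hsmooth : ∀ y z, ‖f' y - f' z‖ ≤ L * ‖y - z‖)
    (hL : 0 < L) (ha : 0 < a)
    (X G : Ω → EuclideanSpace ℝ (Fin k))
    (hXsm : StronglyMeasurable[m] X) (hGmeas : Measurable G)
    (hGint : Integrable G P) (hG2 : Integrable (fun ω => ‖G ω‖ ^ 2) P)
    (hunb : MeasureTheory.condExp m P G =ᵐ[P] fun ω => f' (X ω))
    (hvar : ∀ᵐ ω ∂P, MeasureTheory.condExp m P (fun ω' => ‖G ω' - f' (X ω')‖ ^ 2) ω ≤ σ ^ 2)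
    (hfX : Integrable (fun ω => f (X ω)) P)
    (hX2 : Integrable (fun ω => ‖X ω - xstar‖ ^ 2) P) :
    ∫ ω, ‖X ω - a • G ω - xstar‖ ^ 2 ∂P ≤ ∫ ω, ‖X ω - xstar‖ ^ 2 ∂P
      - 2 * a * (γ - L * a) * ((∫ ω, f (X ω) ∂P) - f xstar) + a ^ 2 * σ ^ 2 := by
  have hcontf' : Continuous f' :=
    (LipschitzWith.of_dist_le_mul (K := ⟨L, hL.le⟩) fun p q => by
      rw [dist_eq_norm, dist_eq_norm]; exact hsmooth p q).continuous
  -- gradient vanishes at the minimizer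
  have hfstar : f' xstar = 0 := by
    have hloc : IsLocalMin f xstar := Filter.Eventually.of_forall hmin
    have hfd := hloc.hasFDerivAt_eq_zero (hgrad xstar).hasFDerivAt
    exact (InnerProductSpace.toDual ℝ _).injective (by rw [hfd, map_zero])
  have hgradnorm : ∀ y, ‖f' y‖ ≤ L * ‖y - xstar‖ := fun y => by
    simpa [hfstar] using hsmooth y xstar
  set V : Ω → EuclideanSpace ℝ (Fin k) := fun ω => f' (X ω) with hVdef
  set D : Ω → EuclideanSpace ℝ (Fin k) := fun ω => G ω - f' (X ω) with hDdef
  have hXmeas : Measurable X := (hXsm.mono hm).measurable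
  have hXm : AEStronglyMeasurable (fun ω => X ω - xstar) P :=
    (hXmeas.sub measurable_const).aestronglyMeasurable
  have hVsm : StronglyMeasurable[m] V := hcontf'.comp_stronglyMeasurable hXsm
  have hVmeas : Measurable V := hcontf'.measurable.comp hXmeas
  have hGm : AEStronglyMeasurable G P := hGmeas.aestronglyMeasurable
  have hVm : AEStronglyMeasurable V P := hVmeas.aestronglyMeasurable
  have hDmeas : Measurable D := hGmeas.sub hVmeas
  have hDm : AEStronglyMeasurable D P := hDmeas.aestronglyMeasurable
  -- integrability
  have hV2 : Integrable (fun ω => ‖V ω‖ ^ 2) P := by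
    refine ((hX2.const_mul (L ^ 2)).mono' ((hVmeas.norm.pow_const 2).aestronglyMeasurable)
      (Filter.Eventually.of_forall fun ω => ?_))
    rw [Real.norm_eq_abs, abs_of_nonneg (by positivity)]
    calc ‖V ω‖ ^ 2 ≤ (L * ‖X ω - xstar‖) ^ 2 := by
          have := hgradnorm (X ω)
          nlinarith [norm_nonneg (V ω), norm_nonneg (X ω - xstar), hL.le]
      _ = L ^ 2 * ‖X ω - xstar‖ ^ 2 := by ring
  have hVint : Integrable V P := by
    refine (((hV2.add (integrable_const 1)).div_const 2).mono' hVm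
      (Filter.Eventually.of_forall fun ω => ?_))
    simp only [Pi.add_apply]
    nlinarith [norm_nonneg (V ω), sq_nonneg (‖V ω‖ - 1)]
  have hDint : Integrable D P := hGint.sub hVint
  have hD2 : Integrable (fun ω => ‖D ω‖ ^ 2) P := by
    refine (((hG2.const_mul 2).add (hV2.const_mul 2)).mono'
      ((hDmeas.norm.pow_const 2).aestronglyMeasurable)
      (Filter.Eventually.of_forall fun ω => ?_))
    simp only [Pi.add_apply]
    rw [Real.norm_eq_abs, abs_of_nonneg (by positivity)]
    have h1 : ‖D ω‖ ≤ ‖G ω‖ + ‖V ω‖ := norm_sub_le _ _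
    nlinarith [norm_nonneg (D ω), norm_nonneg (G ω), norm_nonneg (V ω), sq_nonneg (‖G ω‖ - ‖V ω‖)]
  have hIDX : Integrable (fun ω => ⟪D ω, X ω - xstar⟫) P :=
    integrable_inner_of_sq hDm hXm hD2 hX2
  have hIVX : Integrable (fun ω => ⟪V ω, X ω - xstar⟫) P :=
    integrable_inner_of_sq hVm hXm hV2 hX2
  have hIDV : Integrable (fun ω => ⟪D ω, V ω⟫) P :=
    integrable_inner_of_sq hDm hVm hD2 hV2
  -- conditional expectation facts
  have hVeq : MeasureTheory.condExp m P V = V := condExp_of_stronglyMeasurable hm hVsm hVint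
  have hD0 : MeasureTheory.condExp m P D =ᵐ[P] 0 := by
    refine (condExp_sub hGint hVint m).trans ?_
    filter_upwards [hunb] with ω h1
    simp only [Pi.sub_apply, Pi.zero_apply, hVeq, h1]
    simp [hVdef]
  have hI1 : ∫ ω, ⟪D ω, X ω - xstar⟫ ∂P = 0 :=
    integral_inner_eq_zero hm hDm (hXsm.sub stronglyMeasurable_const) hDint hD2 hX2 hD0
  have hJ2 : ∫ ω, ⟪D ω, V ω⟫ ∂P = 0 :=
    integral_inner_eq_zero hm hDm hVsm hDint hD2 hV2 hD0
  have hJ1 : ∫ ω, ‖D ω‖ ^ 2 ∂P ≤ σ ^ 2 := by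
    have h1 : ∫ ω, ‖D ω‖ ^ 2 ∂P
        = ∫ ω, (MeasureTheory.condExp m P (fun ω' => ‖G ω' - f' (X ω')‖ ^ 2)) ω ∂P :=
      (integral_condExp hm).symm
    rw [h1]
    calc ∫ ω, (MeasureTheory.condExp m P (fun ω' => ‖G ω' - f' (X ω')‖ ^ 2)) ω ∂P
        ≤ ∫ _ω, σ ^ 2 ∂P := integral_mono_ae integrable_condExp (integrable_const _) hvar
      _ = σ ^ 2 := by simp
  -- quasar convexity and smoothness pointwise bounds, integrated
  have hΔ0 : f xstar ≤ ∫ ω, f (X ω) ∂P := by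
    have := integral_mono (integrable_const (f xstar)) hfX fun ω => hmin (X ω)
    simpa using this
  have hI2 : γ * ((∫ ω, f (X ω) ∂P) - f xstar) ≤ ∫ ω, ⟪V ω, X ω - xstar⟫ ∂P := by
    have hpt : ∀ ω, γ * (f (X ω) - f xstar) ≤ ⟪V ω, X ω - xstar⟫ := by
      intro ω
      have h := hqc (X ω)
      have e : ⟪f' (X ω), xstar - X ω⟫ = -⟪V ω, X ω - xstar⟫ := by
        rw [show xstar - X ω = -(X ω - xstar) by abel, inner_neg_right]
      rw [e] at h
      have h2 : f (X ω) - f xstar ≤ (1/γ) * ⟪V ω, X ω - xstar⟫ := by linarith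
      have h3 := mul_le_mul_of_nonneg_left h2 hγ0.le
      calc γ * (f (X ω) - f xstar) ≤ γ * ((1/γ) * ⟪V ω, X ω - xstar⟫) := h3
        _ = ⟪V ω, X ω - xstar⟫ := by field_simp
    have hγint : Integrable (fun ω => γ * (f (X ω) - f xstar)) P :=
      (hfX.sub (integrable_const _)).const_mul γ
    have h4 := integral_mono hγint hIVX hpt
    rw [integral_const_mul, integral_sub hfX (integrable_const _)] at h4
    simpa using h4
  have hJ3 : ∫ ω, ‖V ω‖ ^ 2 ∂P ≤ 2 * L * ((∫ ω, f (X ω) ∂P) - f xstar) := by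
    have hpt : ∀ ω, ‖V ω‖ ^ 2 ≤ 2 * L * (f (X ω) - f xstar) := fun ω =>
      grad_sq_le f f' hL hgrad hsmooth xstar hmin (X ω)
    have hLint : Integrable (fun ω => 2 * L * (f (X ω) - f xstar)) P :=
      (hfX.sub (integrable_const _)).const_mul (2 * L)
    have h4 := integral_mono hV2 hLint hpt
    rw [integral_const_mul, integral_sub hfX (integrable_const _)] at h4
    simpa using h4
  -- pointwise expansion
  have hq : ∀ ω, ‖X ω - a • G ω - xstar‖ ^ 2
      = ‖X ω - xstar‖ ^ 2 - 2 * a * (⟪D ω, X ω - xstar⟫ + ⟪V ω, X ω - xstar⟫)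
        + a ^ 2 * (‖D ω‖ ^ 2 + 2 * ⟪D ω, V ω⟫ + ‖V ω‖ ^ 2) := by
    intro ω
    have h1 : X ω - a • G ω - xstar = (X ω - xstar) - a • G ω := by abel
    have hGDV : G ω = D ω + V ω := by simp [hDdef, hVdef]
    have e1 : ⟪X ω - xstar, a • G ω⟫ = a * (⟪D ω, X ω - xstar⟫ + ⟪V ω, X ω - xstar⟫) := by
      rw [real_inner_smul_right, real_inner_comm, hGDV, inner_add_left]
    have e2 : ‖a • G ω‖ ^ 2 = a ^ 2 * (‖D ω‖ ^ 2 + 2 * ⟪D ω, V ω⟫ + ‖V ω‖ ^ 2) := by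
      rw [norm_smul, Real.norm_eq_abs, mul_pow, sq_abs, hGDV, norm_add_sq_real]
    rw [h1, norm_sub_sq_real, e1, e2]
    ring
  -- integrate the expansion
  have hBint : Integrable (fun ω => 2 * a * (⟪D ω, X ω - xstar⟫ + ⟪V ω, X ω - xstar⟫)) P :=
    (hIDX.add hIVX).const_mul _
  have hIDV2 : Integrable (fun ω => 2 * ⟪D ω, V ω⟫) P := hIDV.const_mul 2
  have hD2' : Integrable (fun ω => ‖D ω‖ ^ 2 + 2 * ⟪D ω, V ω⟫) P := hD2.add hIDV2
  have hCint : Integrable (fun ω => a ^ 2 * (‖D ω‖ ^ 2 + 2 * ⟪D ω, V ω⟫ + ‖V ω‖ ^ 2)) P :=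
    (hD2'.add hV2).const_mul _
  have hAint : Integrable (fun ω => ‖X ω - xstar‖ ^ 2
      - 2 * a * (⟪D ω, X ω - xstar⟫ + ⟪V ω, X ω - xstar⟫)) P := hX2.sub hBint
  have hsplit : ∫ ω, ‖X ω - a • G ω - xstar‖ ^ 2 ∂P
      = (∫ ω, ‖X ω - xstar‖ ^ 2 ∂P)
        - 2 * a * ((∫ ω, ⟪D ω, X ω - xstar⟫ ∂P) + ∫ ω, ⟪V ω, X ω - xstar⟫ ∂P)
        + a ^ 2 * ((∫ ω, ‖D ω‖ ^ 2 ∂P) + 2 * (∫ ω, ⟪D ω, V ω⟫ ∂P) + ∫ ω, ‖V ω‖ ^ 2 ∂P) := by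
    rw [integral_congr_ae (Filter.Eventually.of_forall hq)]
    rw [integral_add hAint hCint, integral_sub hX2 hBint,
      integral_const_mul, integral_const_mul, integral_add hIDX hIVX,
      integral_add hD2' hV2, integral_add hD2 hIDV2, integral_const_mul]
  rw [hsplit, hI1, hJ2]
  have t1 : a ^ 2 * (∫ ω, ‖D ω‖ ^ 2 ∂P) ≤ a ^ 2 * σ ^ 2 :=
    mul_le_mul_of_nonneg_left hJ1 (sq_nonneg a)
  have t2 : a ^ 2 * (∫ ω, ‖V ω‖ ^ 2 ∂P) ≤ a ^ 2 * (2 * L * ((∫ ω, f (X ω) ∂P) - f xstar)) :=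
    mul_le_mul_of_nonneg_left hJ3 (sq_nonneg a)
  have t3 : 2 * a * (γ * ((∫ ω, f (X ω) ∂P) - f xstar)) ≤ 2 * a * (∫ ω, ⟪V ω, X ω - xstar⟫ ∂P) :=
    mul_le_mul_of_nonneg_left hI2 (by positivity)
  nlinarith [t1, t2, t3]

theorem sgd_quasar_varying_steps
    {Ω : Type*} [MeasurableSpace Ω] (P : Measure Ω) [IsProbabilityMeasure P]
    {n : ℕ} (f : EuclideanSpace ℝ (Fin n) → ℝ)
    (f' : EuclideanSpace ℝ (Fin n) → EuclideanSpace ℝ (Fin n))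
    (xstar x₀ : EuclideanSpace ℝ (Fin n))
    (L γ σ R : ℝ) (α : ℕ → ℝ) (T : ℕ)
    (x g : ℕ → Ω → EuclideanSpace ℝ (Fin n))
    (hgrad : ∀ y, HasGradientAt f (f' y) y)
    (hmin : ∀ y, f xstar ≤ f y)
    (hγ0 : 0 < γ) (hγ1 : γ ≤ 1)
    (hqc : ∀ y, f xstar ≥ f y + (1/γ) * ⟪f' y, xstar - y⟫)
    (hsmooth : ∀ y z, ‖f' y - f' z‖ ≤ L * ‖y - z‖)
    (hR : ‖x₀ - xstar‖ ≤ R)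
    (hα : ∀ t ∈ Finset.Icc 1 T, 0 < α t ∧ α t < γ/L)
    (hx0 : x 0 = fun _ => x₀)
    (hstep : ∀ t, x (t+1) = fun ω => x t ω - α (t+1) • g t ω)
    (hgmeas : ∀ t, Measurable (g t))
    (hgint : ∀ t, Integrable (g t) P)
    (hgsqint : ∀ t, Integrable (fun ω => ‖g t ω‖^2) P)
    (hunbiased : ∀ t,
      MeasureTheory.condExp
          (⨆ i ∈ Finset.range t, MeasurableSpace.comap (g i) inferInstance) P (g t)
        =ᵐ[P] fun ω => f' (x t ω))
    (hvar : ∀ t, ∀ᵐ ω ∂P,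
      MeasureTheory.condExp
          (⨆ i ∈ Finset.range t, MeasurableSpace.comap (g i) inferInstance) P
          (fun ω' => ‖g t ω' - f' (x t ω')‖^2) ω ≤ σ^2)
    (hfint : ∀ t, Integrable (fun ω => f (x t ω)) P)
    (hsqint : ∀ t, Integrable (fun ω => ‖x t ω - xstar‖^2) P)
:    (∑ t ∈ Finset.range T, α (t+1)*(γ - L*α (t+1)) * (∫ ω, f (x t ω) ∂P - f xstar)) /
        (∑ t ∈ Finset.Icc 1 T, α t*(γ - L*α t))
      ≤ R^2/(2*∑ t ∈ Finset.Icc 1 T, α t*(γ - L*α t))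
        + σ^2*(∑ t ∈ Finset.Icc 1 T, (α t)^2)/(∑ t ∈ Finset.Icc 1 T, α t*(γ - L*α t)) := by
  rcases Nat.eq_zero_or_pos T with hT | hT
  · subst hT; simp
  have h1T : 1 ∈ Finset.Icc 1 T := by simp only [Finset.mem_Icc]; omega
  have hL : 0 < L := by
    by_contra hLc
    push_neg at hLc
    obtain ⟨h1, h2⟩ := hα 1 h1T
    rcases lt_or_eq_of_le hLc with h | h
    · have : γ / L < 0 := div_neg_of_pos_of_neg hγ0 h
      linarith
    · rw [h, div_zero] at h2; linarith
  have hmle : ∀ t, (⨆ i ∈ Finset.range t, MeasurableSpace.comap (g i) inferInstance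
      : MeasurableSpace Ω) ≤ (inferInstance : MeasurableSpace Ω) := fun t =>
    iSup₂_le fun i _ => (hgmeas i).comap_le
  have hmono : ∀ t, (⨆ i ∈ Finset.range t, MeasurableSpace.comap (g i) inferInstance
      : MeasurableSpace Ω)
      ≤ ⨆ i ∈ Finset.range (t+1), MeasurableSpace.comap (g i) inferInstance := fun t =>
    biSup_mono fun i hi => by
      simp only [Finset.mem_range] at *
      omega
  have hxm : ∀ t, Measurable[⨆ i ∈ Finset.range t,
      MeasurableSpace.comap (g i) inferInstance] (x t) := by
    intro t
    induction t with
    | zero => rw [hx0]; exact measurable_const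
    | succ t ih =>
      rw [hstep t]
      have hgt : Measurable[⨆ i ∈ Finset.range (t+1),
          MeasurableSpace.comap (g i) inferInstance] (g t) := by
        have h0 : Measurable[MeasurableSpace.comap (g t) inferInstance] (g t) :=
          Measurable.of_comap_le le_rfl
        exact h0.mono (le_iSup₂ (f := fun i (_ : i ∈ Finset.range (t + 1)) =>
          MeasurableSpace.comap (g i) inferInstance) t (Finset.self_mem_range_succ t)) le_rfl
      exact ((ih.mono (hmono t) le_rfl).sub (by exact hgt.const_smul (α (t+1))))
  have key : ∀ t, t < T → ∫ ω, ‖x (t+1) ω - xstar‖^2 ∂P ≤ ∫ ω, ‖x t ω - xstar‖^2 ∂P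
      - 2 * α (t+1) * (γ - L * α (t+1)) * ((∫ ω, f (x t ω) ∂P) - f xstar)
      + (α (t+1))^2 * σ^2 := by
    intro t ht
    obtain ⟨ha1, _⟩ := hα (t+1) (by simp; omega)
    have h := onestep P (hmle t) f f' xstar hgrad hmin hγ0 hqc hsmooth hL ha1
      (x t) (g t) ((hxm t).stronglyMeasurable) (hgmeas t) (hgint t) (hgsqint t)
      (hunbiased t) (hvar t) (hfint t) (hsqint t)
    simpa [hstep t] using h
  have tel : ∀ N, N ≤ T → (∫ ω, ‖x N ω - xstar‖^2 ∂P)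
      + ∑ t ∈ Finset.range N, 2 * α (t+1) * (γ - L * α (t+1)) * ((∫ ω, f (x t ω) ∂P) - f xstar)
      ≤ (∫ ω, ‖x 0 ω - xstar‖^2 ∂P) + σ^2 * ∑ t ∈ Finset.range N, (α (t+1))^2 := by
    intro N
    induction N with
    | zero => simp
    | succ N ih =>
      intro hN
      have h1 := ih (by omega)
      have h2 := key N (by omega)
      rw [Finset.sum_range_succ, Finset.sum_range_succ]
      nlinarith [h1, h2]
  have hE0 : ∫ ω, ‖x 0 ω - xstar‖^2 ∂P = ‖x₀ - xstar‖^2 := by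
    rw [hx0]; simp
  have hET : 0 ≤ ∫ ω, ‖x T ω - xstar‖^2 ∂P := integral_nonneg fun ω => by positivity
  have hmain := tel T le_rfl
  rw [hE0] at hmain
  have hR2 : ‖x₀ - xstar‖^2 ≤ R^2 := by nlinarith [norm_nonneg (x₀ - xstar), hR]
  have hreS : ∑ t ∈ Finset.Icc 1 T, α t * (γ - L * α t)
      = ∑ t ∈ Finset.range T, α (t+1) * (γ - L * α (t+1)) := by
    rw [← Finset.Ico_add_one_right_eq_Icc, Finset.sum_Ico_eq_sum_range]
    refine Finset.sum_congr (by norm_num) fun i _ => by rw [Nat.add_comm]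
  have hreB : ∑ t ∈ Finset.Icc 1 T, (α t)^2 = ∑ t ∈ Finset.range T, (α (t+1))^2 := by
    rw [← Finset.Ico_add_one_right_eq_Icc, Finset.sum_Ico_eq_sum_range]
    refine Finset.sum_congr (by norm_num) fun i _ => by rw [Nat.add_comm]
  have hS : 0 < ∑ t ∈ Finset.Icc 1 T, α t * (γ - L * α t) := by
    refine Finset.sum_pos (fun t htm => ?_) ⟨1, h1T⟩
    obtain ⟨h1, h2⟩ := hα t htm
    have h3 : α t * L < γ := by rwa [← lt_div_iff₀ hL]
    exact mul_pos h1 (by linarith)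
  have h2A : 2 * (∑ t ∈ Finset.range T,
        α (t+1) * (γ - L * α (t+1)) * ((∫ ω, f (x t ω) ∂P) - f xstar))
      = ∑ t ∈ Finset.range T,
        2 * α (t+1) * (γ - L * α (t+1)) * ((∫ ω, f (x t ω) ∂P) - f xstar) := by
    rw [Finset.mul_sum]
    exact Finset.sum_congr rfl fun t _ => by ring
  have hσB : 0 ≤ σ^2 * ∑ t ∈ Finset.range T, (α (t+1))^2 := by positivity
  have hA : (∑ t ∈ Finset.range T,
        α (t+1) * (γ - L * α (t+1)) * ((∫ ω, f (x t ω) ∂P) - f xstar))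
      ≤ R^2/2 + σ^2 * ∑ t ∈ Finset.Icc 1 T, (α t)^2 := by
    rw [hreB]
    linarith [hmain, hET, hR2, h2A, hσB]
  calc (∑ t ∈ Finset.range T, α (t+1)*(γ - L*α (t+1)) * (∫ ω, f (x t ω) ∂P - f xstar)) /
        (∑ t ∈ Finset.Icc 1 T, α t*(γ - L*α t))
      ≤ (R^2/2 + σ^2 * ∑ t ∈ Finset.Icc 1 T, (α t)^2) /
        (∑ t ∈ Finset.Icc 1 T, α t*(γ - L*α t)) := by
        exact div_le_div_of_nonneg_right hA hS.le
    _ = R^2/(2*∑ t ∈ Finset.Icc 1 T, α t*(γ - L*α t))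
        + σ^2*(∑ t ∈ Finset.Icc 1 T, (α t)^2)/(∑ t ∈ Finset.Icc 1 T, α t*(γ - L*α t)) := by
        rw [add_div, div_div]
end

section
/- Let f be differentiable and γ-quasar-convex with respect to a global minimizer x* (f need not be smooth), let R ≥ ‖x₀ − x*‖ with R > 0, and suppose the stochastic gradients satisfy E[‖g_t‖² | x₀, g₀, …, g_{t−1}] ≤ G² with G > 0. Running SGD for T iterations with constant step size α = R/(G√T) gives (1/T) ∑_{t=0}^{T−1} E[f(x_t) − f(x*)] ≤ RG/(γ√T). -/
open MeasureTheory Finset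
open scoped RealInnerProductSpace

lemma condexp_comp_clm' {α E F : Type*} {m m0 : MeasurableSpace α} {μ : Measure α}
    [NormedAddCommGroup E] [NormedSpace ℝ E] [CompleteSpace E]
    [NormedAddCommGroup F] [NormedSpace ℝ F] [CompleteSpace F]
    (hm : m ≤ m0) [SigmaFinite (μ.trim hm)] (L : E →L[ℝ] F) {f : α → E}
    (hf : Integrable f μ) :
    (fun ω => L ((μ[f|m]) ω)) =ᵐ[μ] μ[(fun ω => L (f ω))|m] := by
  refine ae_eq_condExp_of_forall_setIntegral_eq hm (L.integrable_comp hf)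
    (fun s _ _ => (L.integrable_comp integrable_condExp).integrableOn)
    (fun s hs hμs => ?_)
    (StronglyMeasurable.aestronglyMeasurable (L.continuous.comp_stronglyMeasurable stronglyMeasurable_condExp))
  rw [L.integral_comp_comm integrable_condExp.integrableOn,
    setIntegral_condExp hm hf hs, ← L.integral_comp_comm hf.integrableOn]

lemma integrable_inner_of_memL2 {α : Type*} [MeasurableSpace α] {μ : Measure α}
    {E : Type*} [NormedAddCommGroup E] [InnerProductSpace ℝ E] {u v : α → E}
    (hu : MemLp u 2 μ) (hv : MemLp v 2 μ) :
    Integrable (fun ω => ⟪u ω, v ω⟫) μ := by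
  have h := L2.integrable_inner (𝕜 := ℝ) (hu.toLp u) (hv.toLp v)
  refine h.congr ?_
  filter_upwards [hu.coeFn_toLp, hv.coeFn_toLp] with ω e1 e2
  rw [e1, e2]

lemma integrable_mul_of_memL2 {α : Type*} [MeasurableSpace α] {μ : Measure α}
    {u v : α → ℝ} (hu : MemLp u 2 μ) (hv : MemLp v 2 μ) :
    Integrable (fun ω => u ω * v ω) μ := by
  have h := integrable_inner_of_memL2 hu hv
  refine h.congr ?_
  filter_upwards with ω
  simp [RCLike.inner_apply, mul_comm]

theorem sgd_quasar_nonsmooth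
    {Ω : Type*} [MeasurableSpace Ω] (P : Measure Ω) [IsProbabilityMeasure P]
    {n : ℕ} (f : EuclideanSpace ℝ (Fin n) → ℝ)
    (f' : EuclideanSpace ℝ (Fin n) → EuclideanSpace ℝ (Fin n))
    (xstar x₀ : EuclideanSpace ℝ (Fin n))
    (γ G R α : ℝ) (T : ℕ)
    (x g : ℕ → Ω → EuclideanSpace ℝ (Fin n))
    (hgrad : ∀ y, HasGradientAt f (f' y) y)
    (hmin : ∀ y, f xstar ≤ f y)
    (hγ0 : 0 < γ) (hγ1 : γ ≤ 1)
    (hqc : ∀ y, f xstar ≥ f y + (1/γ) * ⟪f' y, xstar - y⟫)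
    (hR : ‖x₀ - xstar‖ ≤ R)
    (hR0 : 0 < R) (hG : 0 < G)
    (hαdef : α = R/(G*Real.sqrt T))
    (hx0 : x 0 = fun _ => x₀)
    (hstep : ∀ t, x (t+1) = fun ω => x t ω - α • g t ω)
    (hgmeas : ∀ t, Measurable (g t))
    (hgint : ∀ t, Integrable (g t) P)
    (hgsqint : ∀ t, Integrable (fun ω => ‖g t ω‖^2) P)
    (hunbiased : ∀ t,
      MeasureTheory.condExp
          (⨆ i ∈ Finset.range t, MeasurableSpace.comap (g i) inferInstance) P (g t)
        =ᵐ[P] fun ω => f' (x t ω))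
    (hmoment : ∀ t, ∀ᵐ ω ∂P,
      MeasureTheory.condExp
          (⨆ i ∈ Finset.range t, MeasurableSpace.comap (g i) inferInstance) P
          (fun ω' => ‖g t ω'‖^2) ω ≤ G^2)
    (hfint : ∀ t, Integrable (fun ω => f (x t ω)) P)
:    (1/(T : ℝ)) * ∑ t ∈ Finset.range T, (∫ ω, f (x t ω) ∂P - f xstar)
      ≤ R*G/(γ*Real.sqrt T) := by
  by_cases hT : T = 0
  · subst hT; simp
  have hT0 : (0:ℝ) < T := Nat.cast_pos.mpr (Nat.pos_of_ne_zero hT)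
  set s : ℝ := Real.sqrt T with hsdef
  have hs : 0 < s := Real.sqrt_pos.mpr hT0
  have hs2 : s^2 = T := Real.sq_sqrt hT0.le
  have hα : 0 < α := by rw [hαdef]; positivity
  set m : ℕ → MeasurableSpace Ω :=
    fun t => ⨆ i ∈ Finset.range t, MeasurableSpace.comap (g i) inferInstance with hmdef
  have hm : ∀ t, m t ≤ ‹MeasurableSpace Ω› :=
    fun t => iSup₂_le fun i _ => measurable_iff_comap_le.mp (hgmeas i)
  have hsf : ∀ t, SigmaFinite (P.trim (hm t)) := fun t => by infer_instance
  -- explicit formula for the iterates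
  have hxf : ∀ t, x t = fun ω => x₀ - α • ∑ i ∈ Finset.range t, g i ω := by
    intro t
    induction t with
    | zero => simpa using hx0
    | succ t ih =>
        rw [hstep t, ih]
        funext ω
        simp [Finset.sum_range_succ, smul_add, sub_sub]
  have hgm' : ∀ t i, i ∈ Finset.range t → Measurable[m t] (g i) := by
    intro t i hi
    exact measurable_iff_comap_le.mpr (le_iSup₂ (f := fun i (_ : i ∈ Finset.range t) => MeasurableSpace.comap (g i) inferInstance) i hi)
  have hxm : ∀ t, Measurable[m t] (x t) := by
    intro t
    rw [hxf t]
    exact measurable_const.sub ((Finset.measurable_sum _ (fun i hi => hgm' t i hi)).const_smul α)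
  have hg2 : ∀ t, MemLp (g t) 2 P := fun t =>
    (memLp_two_iff_integrable_sq_norm (hgmeas t).aestronglyMeasurable).mpr (hgsqint t)
  have hy2 : ∀ t, MemLp (fun ω => x t ω - xstar) 2 P := by
    intro t
    have he : (fun ω => x t ω - xstar)
        = fun ω => (x₀ - xstar) - α • ∑ i ∈ Finset.range t, g i ω := by
      funext ω; rw [hxf t]; exact sub_right_comm _ _ _
    rw [he]
    refine (memLp_const _).sub ?_
    have hsum2 : MemLp (fun ω => ∑ i ∈ Finset.range t, g i ω) 2 P := by
      have h := memLp_finset_sum' (Finset.range t) (fun i (_ : i ∈ Finset.range t) => hg2 i)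
      simpa [Finset.sum_fn] using h
    exact hsum2.const_smul α
  have hysq : ∀ t, Integrable (fun ω => ‖x t ω - xstar‖^2) P := fun t =>
    (hy2 t).norm.integrable_sq
  -- pointwise inner product formula on Euclidean space
  have hinner_eq : ∀ (a b : EuclideanSpace ℝ (Fin n)), ⟪a, b⟫ = ∑ i, a i * b i := by
    intro a b
    simp [PiLp.inner_apply, RCLike.inner_apply, mul_comm]
  set D : ℕ → ℝ := fun k => ∫ ω, ‖x k ω - xstar‖^2 ∂P with hD
  -- per-step key inequality
  have key : ∀ t, 2*α*γ*((∫ ω, f (x t ω) ∂P) - f xstar)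
      ≤ D t - D (t+1) + α^2 * G^2 := by
    intro t
    haveI := hsf t
    set y : Ω → EuclideanSpace ℝ (Fin n) := fun ω => x t ω - xstar with hy
    have hym : Measurable[m t] y := (hxm t).sub measurable_const
    have hy2t : MemLp y 2 P := hy2 t
    have hyi : ∀ i, StronglyMeasurable[m t] (fun ω => y ω i) := fun i =>
      (((EuclideanSpace.proj (𝕜 := ℝ) i).continuous.measurable).comp hym).stronglyMeasurable
    have hyc2 : ∀ i, MemLp (fun ω => y ω i) 2 P := fun i => by
      have h := (EuclideanSpace.proj (𝕜 := ℝ) i).comp_memLp' hy2t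
      exact h
    have hgc2 : ∀ i, MemLp (fun ω => g t ω i) 2 P := fun i => by
      have h := (EuclideanSpace.proj (𝕜 := ℝ) i).comp_memLp' (hg2 t)
      exact h
    have hprod : ∀ i, Integrable (fun ω => y ω i * g t ω i) P := fun i =>
      integrable_mul_of_memL2 (hyc2 i) (hgc2 i)
    have hcoord : ∀ i, (P[fun ω => g t ω i | m t]) =ᵐ[P] fun ω => f' (x t ω) i := by
      intro i
      have h1 := condexp_comp_clm' (hm t) (EuclideanSpace.proj (𝕜 := ℝ) i) (hgint t)
      have h2 : (fun ω => (EuclideanSpace.proj (𝕜 := ℝ) i) ((P[g t|m t]) ω))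
          =ᵐ[P] fun ω => f' (x t ω) i := by
        filter_upwards [hunbiased t] with ω hω
        show (P[g t|m t] ω) i = f' (x t ω) i
        rw [show P[g t|m t] ω = f' (x t ω) from hω]
      exact (h1.symm.trans h2)
    have hpull : ∀ i, (P[(fun ω => y ω i) * (fun ω => g t ω i) | m t])
        =ᵐ[P] (fun ω => y ω i) * (P[fun ω => g t ω i | m t]) := fun i =>
      condExp_mul_of_stronglyMeasurable_left (hyi i) (hprod i) ((hgc2 i).integrable one_le_two)
    have he : ∀ i, (P[(fun ω => y ω i) * (fun ω => g t ω i)|m t])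
        =ᵐ[P] fun ω => y ω i * f' (x t ω) i := by
      intro i
      refine (hpull i).trans ?_
      filter_upwards [hcoord i] with ω hω
      simp only [Pi.mul_apply, hω]
    have hfint' : ∀ i, Integrable (fun ω => y ω i * f' (x t ω) i) P := fun i =>
      integrable_condExp.congr (he i)
    have hcint : ∀ i, ∫ ω, y ω i * g t ω i ∂P = ∫ ω, y ω i * f' (x t ω) i ∂P := by
      intro i
      rw [← integral_condExp (hm t) (f := fun ω => y ω i * g t ω i)]
      exact integral_congr_ae (he i)
    have hIyg : Integrable (fun ω => ⟪y ω, g t ω⟫) P := integrable_inner_of_memL2 hy2t (hg2 t)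
    have hIyf : Integrable (fun ω => ⟪y ω, f' (x t ω)⟫) P := by
      have hfe : (fun ω => ⟪y ω, f' (x t ω)⟫) = fun ω => ∑ i, y ω i * f' (x t ω) i :=
        funext fun ω => hinner_eq _ _
      rw [hfe]
      exact integrable_finset_sum _ (fun i _ => hfint' i)
    have hA : ∫ ω, ⟪y ω, g t ω⟫ ∂P = ∫ ω, ⟪y ω, f' (x t ω)⟫ ∂P := by
      have e1 : ∫ ω, ⟪y ω, g t ω⟫ ∂P = ∑ i, ∫ ω, y ω i * g t ω i ∂P := by
        simp_rw [hinner_eq]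
        exact integral_finset_sum _ (fun i _ => hprod i)
      have e2 : ∫ ω, ⟪y ω, f' (x t ω)⟫ ∂P = ∑ i, ∫ ω, y ω i * f' (x t ω) i ∂P := by
        simp_rw [hinner_eq]
        exact integral_finset_sum _ (fun i _ => hfint' i)
      rw [e1, e2]
      exact Finset.sum_congr rfl fun i _ => hcint i
    have hq : ∀ ω, γ * (f (x t ω) - f xstar) ≤ ⟪y ω, f' (x t ω)⟫ := by
      intro ω
      have h1 := hqc (x t ω)
      have h2 : ⟪y ω, f' (x t ω)⟫ = -⟪f' (x t ω), xstar - x t ω⟫ := by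
        rw [real_inner_comm, show y ω = -(xstar - x t ω) by simp [hy], inner_neg_right]
      rw [h2]
      have h3 : γ * (1/γ) = 1 := by field_simp
      have h4 := mul_le_mul_of_nonneg_left
        (by linarith : (1/γ) * ⟪f' (x t ω), xstar - x t ω⟫ ≤ f xstar - f (x t ω)) hγ0.le
      rw [← mul_assoc, h3, one_mul] at h4
      linarith
    have hqint : γ * ((∫ ω, f (x t ω) ∂P) - f xstar) ≤ ∫ ω, ⟪y ω, g t ω⟫ ∂P := by
      rw [hA]
      have h5 : ∫ ω, γ * (f (x t ω) - f xstar) ∂P ≤ ∫ ω, ⟪y ω, f' (x t ω)⟫ ∂P :=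
        integral_mono (((hfint t).sub (integrable_const _)).const_mul γ) hIyf (fun ω => hq ω)
      have h6 : ∫ ω, γ * (f (x t ω) - f xstar) ∂P = γ * ((∫ ω, f (x t ω) ∂P) - f xstar) := by
        rw [integral_const_mul, integral_sub (hfint t) (integrable_const _)]
        simp
      linarith [h5, h6.symm.le, h6.le]
    have hB : ∫ ω, ‖g t ω‖^2 ∂P ≤ G^2 := by
      rw [← integral_condExp (hm t) (f := fun ω => ‖g t ω‖^2)]
      have h7 := integral_mono_ae integrable_condExp (integrable_const (G^2)) (hmoment t)
      refine le_trans h7 ?_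
      rw [integral_const, probReal_univ]
      simp
    have hexp : D (t+1)
        = D t - 2*α*(∫ ω, ⟪y ω, g t ω⟫ ∂P) + α^2*(∫ ω, ‖g t ω‖^2 ∂P) := by
      have hpt : (fun ω => ‖x (t+1) ω - xstar‖^2)
          = fun ω => ‖y ω‖^2 - 2*α*⟪y ω, g t ω⟫ + α^2*‖g t ω‖^2 := by
        funext ω
        rw [hstep t]
        have hee : x t ω - α • g t ω - xstar = y ω - α • g t ω := by
          simp only [hy]; abel
        rw [hee, norm_sub_sq_real, real_inner_smul_right, norm_smul]
        simp only [Real.norm_eq_abs, mul_pow, sq_abs]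
        ring
      have hIy2 : Integrable (fun ω => ‖y ω‖^2) P := hysq t
      have h11 : Integrable (fun ω => ‖y ω‖^2 - 2*α*⟪y ω, g t ω⟫) P :=
        hIy2.sub (hIyg.const_mul (2*α))
      have h12 : Integrable (fun ω => α^2*‖g t ω‖^2) P := (hgsqint t).const_mul (α^2)
      simp only [hD]
      rw [hpt, integral_add h11 h12, integral_sub hIy2 (hIyg.const_mul (2*α)),
        integral_const_mul, integral_const_mul]
    have h8 := mul_le_mul_of_nonneg_left hqint (by positivity : (0:ℝ) ≤ 2*α)
    have h9 := mul_le_mul_of_nonneg_left hB (sq_nonneg α)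
    nlinarith [h8, h9, hexp]
  -- telescoping
  have tele : ∑ t ∈ Finset.range T, (2*α*γ*((∫ ω, f (x t ω) ∂P) - f xstar))
      ≤ ∑ t ∈ Finset.range T, ((D t - D (t+1)) + α^2*G^2) :=
    Finset.sum_le_sum (fun t _ => by have := key t; linarith)
  have htele : ∑ t ∈ Finset.range T, (D t - D (t+1)) = D 0 - D T :=
    Finset.sum_range_sub' D T
  have hDT : 0 ≤ D T := by
    simp only [hD]
    exact integral_nonneg fun ω => by positivity
  have hD0 : D 0 ≤ R^2 := by
    simp only [hD, hx0]
    rw [integral_const]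
    simp only [measure_univ, ENNReal.toReal_one, smul_eq_mul, one_mul, probReal_univ]
    exact pow_le_pow_left₀ (norm_nonneg _) hR 2
  set S : ℝ := ∑ t ∈ Finset.range T, ((∫ ω, f (x t ω) ∂P) - f xstar) with hSdef
  have hS : 2*α*γ*S ≤ R^2 + (T:ℝ)*(α^2*G^2) := by
    have e1 : ∑ t ∈ Finset.range T, (2*α*γ*((∫ ω, f (x t ω) ∂P) - f xstar)) = 2*α*γ*S := by
      rw [hSdef, Finset.mul_sum]
    have e2 : ∑ t ∈ Finset.range T, ((D t - D (t+1)) + α^2*G^2)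
        = (D 0 - D T) + (T:ℝ)*(α^2*G^2) := by
      rw [Finset.sum_add_distrib, htele, Finset.sum_const, Finset.card_range,
        nsmul_eq_mul]
    rw [e1, e2] at tele
    linarith
  have hα' : α * (G * s) = R := by
    rw [hαdef, hsdef]
    field_simp
  have hTα : (T:ℝ)*(α^2*G^2) = R^2 := by
    rw [← hs2, ← hα']
    ring
  have hSbound : S ≤ R*G*s/γ := by
    have hpos : (0:ℝ) < 2*α*γ := by positivity
    have heq : 2*α*γ*(R*G*s/γ) = 2*R^2 := by
      rw [← hα']
      field_simp
    have : 2*α*γ*S ≤ 2*α*γ*(R*G*s/γ) := by rw [heq]; linarith [hS, hTα]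
    exact le_of_mul_le_mul_left this hpos
  have hfin : (1/(T:ℝ)) * (R*G*s/γ) = R*G/(γ*s) := by
    rw [← hs2]
    field_simp
  calc (1/(T:ℝ)) * S ≤ (1/(T:ℝ)) * (R*G*s/γ) :=
        mul_le_mul_of_nonneg_left hSbound (by positivity)
    _ = R*G/(γ*s) := hfin
end

section
/- Let f be L-smooth and γ-quasar-convex with respect to a global minimizer x*, run SGD with constant step size α > 0, and fix λ > 0. Then for every t ≥ 0, E⟨∇f(x_t), x_{t+1} − x*⟩ ≤ σ²/(2λ) + (1/(2α)) E‖x_t − x*‖² − (1/(2α)) E‖x_{t+1} − x*‖² − (1/(2α) − λ/2) E‖x_{t+1} − x_t‖². -/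
open MeasureTheory Finset
open scoped RealInnerProductSpace

private lemma coord_sq_le {n : ℕ} (w : EuclideanSpace ℝ (Fin n)) (i : Fin n) :
    (w i)^2 ≤ ‖w‖^2 := by
  have h : ‖w‖^2 = ∑ j, ‖w j‖^2 := by
    rw [EuclideanSpace.norm_eq, Real.sq_sqrt (Finset.sum_nonneg fun j _ => sq_nonneg _)]
  have h2 : ‖w i‖^2 ≤ ∑ j, ‖w j‖^2 :=
    Finset.single_le_sum (f := fun j => ‖w j‖^2) (fun j _ => sq_nonneg _) (Finset.mem_univ i)
  rw [h]; simpa [Real.norm_eq_abs, sq_abs] using h2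

private lemma coord_abs_le {n : ℕ} (w : EuclideanSpace ℝ (Fin n)) (i : Fin n) :
    |w i| ≤ ‖w‖ := by
  nlinarith [coord_sq_le w i, abs_nonneg (w i), norm_nonneg w, sq_abs (w i)]

private lemma aux_inner_int {Ω : Type*} [MeasurableSpace Ω] {P : Measure Ω} {n : ℕ}
    {a b : Ω → EuclideanSpace ℝ (Fin n)}
    (ha : Measurable a) (hb : Measurable b)
    (ha2 : Integrable (fun ω => ‖a ω‖^2) P) (hb2 : Integrable (fun ω => ‖b ω‖^2) P) :
    Integrable (fun ω => ⟪a ω, b ω⟫) P := by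
  refine Integrable.mono' ((ha2.add hb2).div_const 2) (ha.inner hb).aestronglyMeasurable ?_
  refine Filter.Eventually.of_forall fun ω => ?_
  simp only [Pi.add_apply]
  have h := abs_real_inner_le_norm (a ω) (b ω)
  rw [Real.norm_eq_abs]
  nlinarith [sq_nonneg (‖a ω‖ - ‖b ω‖), norm_nonneg (a ω), norm_nonneg (b ω)]

private lemma aux_coord_mul_int {Ω : Type*} [MeasurableSpace Ω] {P : Measure Ω} {n : ℕ}
    {a b : Ω → EuclideanSpace ℝ (Fin n)}
    (ha : Measurable a) (hb : Measurable b)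
    (ha2 : Integrable (fun ω => ‖a ω‖^2) P) (hb2 : Integrable (fun ω => ‖b ω‖^2) P)
    (i : Fin n) : Integrable (fun ω => a ω i * b ω i) P := by
  refine Integrable.mono' ((ha2.add hb2).div_const 2)
    (((EuclideanSpace.proj (𝕜 := ℝ) i).continuous.measurable.comp ha).mul
      ((EuclideanSpace.proj (𝕜 := ℝ) i).continuous.measurable.comp hb)).aestronglyMeasurable ?_
  refine Filter.Eventually.of_forall fun ω => ?_
  simp only [Pi.add_apply]
  rw [Real.norm_eq_abs, abs_mul]
  nlinarith [coord_sq_le (a ω) i, coord_sq_le (b ω) i, sq_nonneg (|a ω i| - |b ω i|),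
    abs_nonneg (a ω i), abs_nonneg (b ω i), sq_abs (a ω i), sq_abs (b ω i)]

theorem sgd_quasar_inner_product_bound
    {Ω : Type*} [MeasurableSpace Ω] (P : Measure Ω) [IsProbabilityMeasure P]
    {n : ℕ} (f : EuclideanSpace ℝ (Fin n) → ℝ)
    (f' : EuclideanSpace ℝ (Fin n) → EuclideanSpace ℝ (Fin n))
    (xstar x₀ : EuclideanSpace ℝ (Fin n))
    (L γ σ α lam : ℝ)
    (x g : ℕ → Ω → EuclideanSpace ℝ (Fin n))
    (hgrad : ∀ y, HasGradientAt f (f' y) y)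
    (hmin : ∀ y, f xstar ≤ f y)
    (hγ0 : 0 < γ) (hγ1 : γ ≤ 1)
    (hqc : ∀ y, f xstar ≥ f y + (1/γ) * ⟪f' y, xstar - y⟫)
    (hsmooth : ∀ y z, ‖f' y - f' z‖ ≤ L * ‖y - z‖)
    (hα0 : 0 < α) (hlam : 0 < lam)
    (hx0 : x 0 = fun _ => x₀)
    (hstep : ∀ t, x (t+1) = fun ω => x t ω - α • g t ω)
    (hgmeas : ∀ t, Measurable (g t))
    (hgint : ∀ t, Integrable (g t) P)
    (hgsqint : ∀ t, Integrable (fun ω => ‖g t ω‖^2) P)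
    (hunbiased : ∀ t,
      MeasureTheory.condExp
          (⨆ i ∈ Finset.range t, MeasurableSpace.comap (g i) inferInstance) P (g t)
        =ᵐ[P] fun ω => f' (x t ω))
    (hvar : ∀ t, ∀ᵐ ω ∂P,
      MeasureTheory.condExp
          (⨆ i ∈ Finset.range t, MeasurableSpace.comap (g i) inferInstance) P
          (fun ω' => ‖g t ω' - f' (x t ω')‖^2) ω ≤ σ^2)
    (hsqint : ∀ t, Integrable (fun ω => ‖x t ω - xstar‖^2) P)
    (hinnerint : ∀ t, Integrable (fun ω => ⟪f' (x t ω), x (t+1) ω - xstar⟫) P)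
:    ∀ t : ℕ,
      ∫ ω, ⟪f' (x t ω), x (t+1) ω - xstar⟫ ∂P
      ≤ σ^2/(2*lam) + (1/(2*α)) * ∫ ω, ‖x t ω - xstar‖^2 ∂P
        - (1/(2*α)) * ∫ ω, ‖x (t+1) ω - xstar‖^2 ∂P
        - (1/(2*α) - lam/2) * ∫ ω, ‖x (t+1) ω - x t ω‖^2 ∂P := by
  intro t
  have hm : (⨆ i ∈ Finset.range t, MeasurableSpace.comap (g i) inferInstance)
      ≤ ‹MeasurableSpace Ω› :=
    iSup_le fun i => iSup_le fun _ => (hgmeas i).comap_le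
  haveI hsf : SigmaFinite (P.trim hm) := by infer_instance
  -- measurability of the iterates
  have hxms : ∀ s : ℕ, StronglyMeasurable[⨆ i ∈ Finset.range s,
      MeasurableSpace.comap (g i) inferInstance] (x s) := by
    intro s
    induction s with
    | zero => rw [hx0]; exact stronglyMeasurable_const
    | succ k ih =>
      rw [hstep k]
      have hmono : (⨆ i ∈ Finset.range k,
          MeasurableSpace.comap (g i) inferInstance : MeasurableSpace Ω)
          ≤ ⨆ i ∈ Finset.range (k+1), MeasurableSpace.comap (g i) inferInstance := by
        refine iSup_le fun i => iSup_le fun hi => ?_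
        exact le_iSup_of_le i (le_iSup_of_le
          (Finset.mem_range.mpr (Nat.lt_succ_of_lt (Finset.mem_range.mp hi))) le_rfl)
      have hgk : Measurable[⨆ i ∈ Finset.range (k+1),
          MeasurableSpace.comap (g i) inferInstance] (g k) := by
        have h1 : Measurable[MeasurableSpace.comap (g k) inferInstance] (g k) :=
          Measurable.of_comap_le le_rfl
        exact h1.mono (le_iSup_of_le k
          (le_iSup_of_le (Finset.self_mem_range_succ k) le_rfl)) le_rfl
      exact (ih.mono hmono).sub (hgk.stronglyMeasurable.const_smul α)
  have hxm : StronglyMeasurable[⨆ i ∈ Finset.range t,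
      MeasurableSpace.comap (g i) inferInstance] (x t) := hxms t
  have hxtmeas : Measurable (x t) := (hxm.mono hm).measurable
  have hxt1meas : Measurable (x (t+1)) := by
    rw [hstep t]; exact hxtmeas.sub ((hgmeas t).const_smul α)
  have hf'cont : Continuous f' := by
    have hlip : LipschitzWith (Real.toNNReal L) f' := by
      apply LipschitzWith.of_dist_le_mul
      intro y z
      rw [dist_eq_norm, dist_eq_norm]
      calc ‖f' y - f' z‖ ≤ L * ‖y - z‖ := hsmooth y z
      _ ≤ Real.toNNReal L * ‖y - z‖ :=
          mul_le_mul_of_nonneg_right (Real.le_coe_toNNReal L) (norm_nonneg _)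
    exact hlip.continuous
  have hFmeas : Measurable (fun ω => f' (x t ω)) := hf'cont.measurable.comp hxtmeas
  have humeas : Measurable (fun ω => x t ω - xstar) := hxtmeas.sub measurable_const
  have hu2 : Integrable (fun ω => ‖x t ω - xstar‖^2) P := hsqint t
  have hv2 : Integrable (fun ω => ‖x (t+1) ω - xstar‖^2) P := hsqint (t+1)
  have hFbound : ∀ ω, ‖f' (x t ω)‖ ≤ ‖f' xstar‖ + |L| * ‖x t ω - xstar‖ := by
    intro ω
    have h1 := hsmooth (x t ω) xstar
    have h2 := norm_sub_norm_le (f' (x t ω)) (f' xstar)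
    have h3 : L * ‖x t ω - xstar‖ ≤ |L| * ‖x t ω - xstar‖ :=
      mul_le_mul_of_nonneg_right (le_abs_self L) (norm_nonneg _)
    linarith
  have hunorm : Integrable (fun ω => ‖x t ω - xstar‖) P := by
    refine Integrable.mono' (((integrable_const (1:ℝ)).add hu2).div_const 2)
      humeas.norm.aestronglyMeasurable ?_
    refine Filter.Eventually.of_forall fun ω => ?_
    simp only [Pi.add_apply]
    rw [Real.norm_eq_abs, abs_of_nonneg (norm_nonneg _)]
    nlinarith [sq_nonneg (‖x t ω - xstar‖ - 1)]
  have hF2 : Integrable (fun ω => ‖f' (x t ω)‖^2) P := by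
    refine Integrable.mono'
      ((integrable_const (2*‖f' xstar‖^2)).add (hu2.const_mul (2*L^2)))
      (hFmeas.norm.pow_const 2).aestronglyMeasurable ?_
    refine Filter.Eventually.of_forall fun ω => ?_
    simp only [Pi.add_apply]
    rw [Real.norm_eq_abs, abs_of_nonneg (sq_nonneg _)]
    have h1 := hFbound ω
    nlinarith [sq_nonneg (‖f' xstar‖ - |L| * ‖x t ω - xstar‖), sq_abs L,
      norm_nonneg (f' (x t ω)), norm_nonneg (x t ω - xstar), abs_nonneg L,
      mul_nonneg (abs_nonneg L) (norm_nonneg (x t ω - xstar)), norm_nonneg (f' xstar)]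
  have hFint : Integrable (fun ω => f' (x t ω)) P := by
    refine Integrable.mono' ((integrable_const ‖f' xstar‖).add (hunorm.const_mul |L|))
      hFmeas.aestronglyMeasurable ?_
    refine Filter.Eventually.of_forall fun ω => ?_
    simp only [Pi.add_apply]
    exact hFbound ω
  have herr2 : Integrable (fun ω => ‖g t ω - f' (x t ω)‖^2) P := by
    refine Integrable.mono' (((hgsqint t).const_mul 2).add (hF2.const_mul 2))
      ((((hgmeas t).sub hFmeas).norm.pow_const 2)).aestronglyMeasurable ?_
    refine Filter.Eventually.of_forall fun ω => ?_
    simp only [Pi.add_apply]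
    rw [Real.norm_eq_abs, abs_of_nonneg (sq_nonneg _)]
    have h1 := norm_sub_le (g t ω) (f' (x t ω))
    nlinarith [norm_nonneg (g t ω), norm_nonneg (f' (x t ω)),
      norm_nonneg (g t ω - f' (x t ω)), sq_nonneg (‖g t ω‖ - ‖f' (x t ω)‖)]
  have hd2 : Integrable (fun ω => ‖x (t+1) ω - x t ω‖^2) P := by
    have hdeq : (fun ω => ‖x (t+1) ω - x t ω‖^2) = fun ω => α^2 * ‖g t ω‖^2 := by
      funext ω
      simp only [hstep t]
      have h1 : x t ω - α • g t ω - x t ω = -(α • g t ω) := by abel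
      rw [h1, norm_neg, norm_smul, Real.norm_eq_abs, mul_pow, sq_abs]
    rw [hdeq]
    exact (hgsqint t).const_mul _
  have hFUint : Integrable (fun ω => ⟪x t ω - xstar, f' (x t ω)⟫) P :=
    aux_inner_int humeas hFmeas hu2 hF2
  have hGUint : Integrable (fun ω => ⟪x t ω - xstar, g t ω⟫) P :=
    aux_inner_int humeas (hgmeas t) hu2 (hgsqint t)
  have hZint : Integrable (fun ω => ⟪f' (x t ω) - g t ω, x t ω - xstar⟫) P := by
    have heq : (fun ω => ⟪f' (x t ω) - g t ω, x t ω - xstar⟫)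
        = fun ω => ⟪x t ω - xstar, f' (x t ω)⟫ - ⟪x t ω - xstar, g t ω⟫ := by
      funext ω
      rw [inner_sub_left, real_inner_comm (f' (x t ω)), real_inner_comm (g t ω)]
    rw [heq]; exact hFUint.sub hGUint
  -- per-coordinate integrability
  have hgi : ∀ i : Fin n, Integrable (fun ω => g t ω i) P := by
    intro i
    refine Integrable.mono' (hgint t).norm
      ((EuclideanSpace.proj (𝕜 := ℝ) i).continuous.measurable.comp (hgmeas t)).aestronglyMeasurable ?_
    refine Filter.Eventually.of_forall fun ω => ?_
    rw [Real.norm_eq_abs]; exact coord_abs_le (g t ω) i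
  have hFi : ∀ i : Fin n, Integrable (fun ω => f' (x t ω) i) P := by
    intro i
    refine Integrable.mono' hFint.norm
      ((EuclideanSpace.proj (𝕜 := ℝ) i).continuous.measurable.comp hFmeas).aestronglyMeasurable ?_
    refine Filter.Eventually.of_forall fun ω => ?_
    rw [Real.norm_eq_abs]; exact coord_abs_le (f' (x t ω)) i
  -- per-coordinate conditional expectation
  have hcondcoord : ∀ i : Fin n,
      (fun ω => f' (x t ω) i) =ᵐ[P]
        MeasureTheory.condExp
          (⨆ i ∈ Finset.range t, MeasurableSpace.comap (g i) inferInstance) P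
          (fun ω => g t ω i) := by
    intro i
    refine ae_eq_condExp_of_forall_setIntegral_eq hm (hgi i) ?_ ?_ ?_
    · intro s _ _
      exact (hFi i).integrableOn
    · intro s hs _
      have hvec : ∫ ω in s, g t ω ∂P = ∫ ω in s, f' (x t ω) ∂P := by
        rw [← setIntegral_condExp hm (hgint t) hs]
        exact integral_congr_ae (ae_restrict_of_ae (hunbiased t))
      have h1 := ContinuousLinearMap.integral_comp_comm
        (EuclideanSpace.proj (𝕜 := ℝ) i) ((hgint t).integrableOn (s := s))
      have h2 := ContinuousLinearMap.integral_comp_comm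
        (EuclideanSpace.proj (𝕜 := ℝ) i) (hFint.integrableOn (s := s))
      calc ∫ ω in s, f' (x t ω) i ∂P = (∫ ω in s, f' (x t ω) ∂P) i := h2
        _ = (∫ ω in s, g t ω ∂P) i := by rw [hvec]
        _ = ∫ ω in s, g t ω i ∂P := h1.symm
    · exact StronglyMeasurable.aestronglyMeasurable
        (((EuclideanSpace.proj (𝕜 := ℝ) i).continuous.comp
          hf'cont).comp_stronglyMeasurable hxm)
  -- key orthogonality-type identity
  have hkey : ∫ ω, ⟪x t ω - xstar, g t ω⟫ ∂P
      = ∫ ω, ⟪x t ω - xstar, f' (x t ω)⟫ ∂P := by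
    have hinner : ∀ (a b : EuclideanSpace ℝ (Fin n)), ⟪a, b⟫ = ∑ j, a j * b j := by
      intro a b
      simp [PiLp.inner_apply, RCLike.inner_apply, conj_trivial]
      exact Finset.sum_congr rfl fun _ _ => mul_comm _ _
    simp_rw [hinner]
    rw [show (∫ ω, ∑ j, (x t ω - xstar) j * g t ω j ∂P)
          = ∑ j, ∫ ω, (x t ω - xstar) j * g t ω j ∂P from
        integral_finset_sum _ (fun i _ => aux_coord_mul_int humeas (hgmeas t) hu2 (hgsqint t) i),
      show (∫ ω, ∑ j, (x t ω - xstar) j * f' (x t ω) j ∂P)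
          = ∑ j, ∫ ω, (x t ω - xstar) j * f' (x t ω) j ∂P from
        integral_finset_sum _ (fun i _ => aux_coord_mul_int humeas hFmeas hu2 hF2 i)]
    refine Finset.sum_congr rfl fun i _ => ?_
    have hui : StronglyMeasurable[⨆ i ∈ Finset.range t,
        MeasurableSpace.comap (g i) inferInstance] (fun ω => (x t ω - xstar) i) :=
      (((EuclideanSpace.proj (𝕜 := ℝ) i).continuous.comp
        (continuous_id.sub continuous_const)).comp_stronglyMeasurable hxm)
    have hmul1 : Integrable (fun ω => (x t ω - xstar) i * g t ω i) P :=
      aux_coord_mul_int humeas (hgmeas t) hu2 (hgsqint t) i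
    have hpull := condExp_mul_of_stronglyMeasurable_left
      (m := ⨆ i ∈ Finset.range t, MeasurableSpace.comap (g i) inferInstance) (μ := P)
      hui hmul1 (hgi i)
    calc ∫ ω, (x t ω - xstar) i * g t ω i ∂P
        = ∫ ω, (MeasureTheory.condExp
            (⨆ i ∈ Finset.range t, MeasurableSpace.comap (g i) inferInstance) P
            ((fun ω => (x t ω - xstar) i) * fun ω => g t ω i)) ω ∂P :=
          (integral_condExp hm).symm
      _ = ∫ ω, ((fun ω => (x t ω - xstar) i)
            * MeasureTheory.condExp
              (⨆ i ∈ Finset.range t, MeasurableSpace.comap (g i) inferInstance) P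
              (fun ω => g t ω i)) ω ∂P :=
          integral_congr_ae hpull
      _ = ∫ ω, (x t ω - xstar) i * f' (x t ω) i ∂P := by
          refine integral_congr_ae ?_
          filter_upwards [hcondcoord i] with ω hω
          simp only [Pi.mul_apply]
          rw [hω]
  have hZ : ∫ ω, ⟪f' (x t ω) - g t ω, x t ω - xstar⟫ ∂P = 0 := by
    have heq : (fun ω => ⟪f' (x t ω) - g t ω, x t ω - xstar⟫)
        = fun ω => ⟪x t ω - xstar, f' (x t ω)⟫ - ⟪x t ω - xstar, g t ω⟫ := by
      funext ω
      rw [inner_sub_left, real_inner_comm (f' (x t ω)), real_inner_comm (g t ω)]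
    rw [heq, integral_sub hFUint hGUint, hkey, sub_self]
  -- variance bound
  have hIE : ∫ ω, ‖g t ω - f' (x t ω)‖^2 ∂P ≤ σ^2 := by
    rw [← integral_condExp hm (f := fun ω => ‖g t ω - f' (x t ω)‖^2)]
    calc ∫ ω, (MeasureTheory.condExp
          (⨆ i ∈ Finset.range t, MeasurableSpace.comap (g i) inferInstance) P
          fun ω' => ‖g t ω' - f' (x t ω')‖^2) ω ∂P
        ≤ ∫ _ω, σ^2 ∂P := integral_mono_ae integrable_condExp (integrable_const _) (hvar t)
      _ = σ^2 := by simp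
  -- pointwise inequality
  have hptwise : ∀ ω, ⟪f' (x t ω), x (t+1) ω - xstar⟫ ≤
      (1/(2*α)) * (‖x t ω - xstar‖^2 - ‖x (t+1) ω - xstar‖^2 - ‖x (t+1) ω - x t ω‖^2)
      + ⟪f' (x t ω) - g t ω, x t ω - xstar⟫
      + ((1/(2*lam)) * ‖g t ω - f' (x t ω)‖^2 + (lam/2) * ‖x (t+1) ω - x t ω‖^2) := by
    intro ω
    have hst : x (t+1) ω = x t ω - α • g t ω := by rw [hstep t]
    have hab : (x t ω - xstar) - (x (t+1) ω - xstar) = α • g t ω := by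
      rw [hst]; abel
    have hd : x (t+1) ω - x t ω = -((x t ω - xstar) - (x (t+1) ω - xstar)) := by abel
    have hnd : ‖x (t+1) ω - x t ω‖ = ‖(x t ω - xstar) - (x (t+1) ω - xstar)‖ := by
      rw [hd, norm_neg]
    have hsq : ‖(x t ω - xstar) - (x (t+1) ω - xstar)‖^2
        = ‖x t ω - xstar‖^2 - 2*⟪x t ω - xstar, x (t+1) ω - xstar⟫
          + ‖x (t+1) ω - xstar‖^2 := norm_sub_sq_real _ _
    have hinner1 : ⟪(x t ω - xstar) - (x (t+1) ω - xstar), x (t+1) ω - xstar⟫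
        = α * ⟪g t ω, x (t+1) ω - xstar⟫ := by rw [hab, real_inner_smul_left]
    have hinner2 : ⟪(x t ω - xstar) - (x (t+1) ω - xstar), x (t+1) ω - xstar⟫
        = ⟪x t ω - xstar, x (t+1) ω - xstar⟫ - ‖x (t+1) ω - xstar‖^2 := by
      rw [inner_sub_left, real_inner_self_eq_norm_sq]
    have h3 : α * ⟪g t ω, x (t+1) ω - xstar⟫
        = ⟪x t ω - xstar, x (t+1) ω - xstar⟫ - ‖x (t+1) ω - xstar‖^2 := by
      rw [← hinner1, hinner2]
    have h1 : 2*α*⟪g t ω, x (t+1) ω - xstar⟫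
        = ‖x t ω - xstar‖^2 - ‖x (t+1) ω - xstar‖^2 - ‖x (t+1) ω - x t ω‖^2 := by
      rw [hnd, hsq]; linarith [h3]
    have h1' : (1/(2*α)) * (‖x t ω - xstar‖^2 - ‖x (t+1) ω - xstar‖^2
        - ‖x (t+1) ω - x t ω‖^2) = ⟪g t ω, x (t+1) ω - xstar⟫ := by
      rw [← h1]; field_simp
    have hyoung : ⟪f' (x t ω) - g t ω, x (t+1) ω - x t ω⟫
        ≤ (1/(2*lam)) * ‖g t ω - f' (x t ω)‖^2 + (lam/2) * ‖x (t+1) ω - x t ω‖^2 := by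
      have hcs := real_inner_le_norm (f' (x t ω) - g t ω) (x (t+1) ω - x t ω)
      rw [norm_sub_rev (f' (x t ω))] at hcs
      have hNM : ‖g t ω - f' (x t ω)‖ * ‖x (t+1) ω - x t ω‖
          ≤ (1/(2*lam)) * ‖g t ω - f' (x t ω)‖^2 + (lam/2) * ‖x (t+1) ω - x t ω‖^2 := by
        rw [← sub_nonneg]
        have heq2 : (1/(2*lam)) * ‖g t ω - f' (x t ω)‖^2
            + (lam/2) * ‖x (t+1) ω - x t ω‖^2
            - ‖g t ω - f' (x t ω)‖ * ‖x (t+1) ω - x t ω‖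
            = (‖g t ω - f' (x t ω)‖ - lam * ‖x (t+1) ω - x t ω‖)^2 / (2*lam) := by
          field_simp; ring
        rw [heq2]; positivity
      linarith
    have hdec : ⟪f' (x t ω), x (t+1) ω - xstar⟫ = ⟪g t ω, x (t+1) ω - xstar⟫
        + ⟪f' (x t ω) - g t ω, x t ω - xstar⟫
        + ⟪f' (x t ω) - g t ω, x (t+1) ω - x t ω⟫ := by
      simp only [inner_sub_left, inner_sub_right]
      ring
    rw [hdec, h1']
    linarith
  -- integrability of RHS
  have hA : Integrable (fun ω => (1/(2*α)) * (‖x t ω - xstar‖^2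
      - ‖x (t+1) ω - xstar‖^2 - ‖x (t+1) ω - x t ω‖^2)) P :=
    ((hu2.sub hv2).sub hd2).const_mul _
  have hC : Integrable (fun ω => (1/(2*lam)) * ‖g t ω - f' (x t ω)‖^2
      + (lam/2) * ‖x (t+1) ω - x t ω‖^2) P :=
    (herr2.const_mul _).add (hd2.const_mul _)
  have hRHS : Integrable (fun ω =>
      (1/(2*α)) * (‖x t ω - xstar‖^2 - ‖x (t+1) ω - xstar‖^2 - ‖x (t+1) ω - x t ω‖^2)
      + ⟪f' (x t ω) - g t ω, x t ω - xstar⟫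
      + ((1/(2*lam)) * ‖g t ω - f' (x t ω)‖^2 + (lam/2) * ‖x (t+1) ω - x t ω‖^2)) P :=
    (hA.add hZint).add hC
  have hle : ∫ ω, ⟪f' (x t ω), x (t+1) ω - xstar⟫ ∂P ≤ ∫ ω,
      ((1/(2*α)) * (‖x t ω - xstar‖^2 - ‖x (t+1) ω - xstar‖^2 - ‖x (t+1) ω - x t ω‖^2)
      + ⟪f' (x t ω) - g t ω, x t ω - xstar⟫
      + ((1/(2*lam)) * ‖g t ω - f' (x t ω)‖^2 + (lam/2) * ‖x (t+1) ω - x t ω‖^2)) ∂P :=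
    integral_mono (hinnerint t) hRHS hptwise
  have hsplit : ∫ ω,
      ((1/(2*α)) * (‖x t ω - xstar‖^2 - ‖x (t+1) ω - xstar‖^2 - ‖x (t+1) ω - x t ω‖^2)
      + ⟪f' (x t ω) - g t ω, x t ω - xstar⟫
      + ((1/(2*lam)) * ‖g t ω - f' (x t ω)‖^2 + (lam/2) * ‖x (t+1) ω - x t ω‖^2)) ∂P
      = (1/(2*α)) * ((∫ ω, ‖x t ω - xstar‖^2 ∂P) - (∫ ω, ‖x (t+1) ω - xstar‖^2 ∂P)
          - ∫ ω, ‖x (t+1) ω - x t ω‖^2 ∂P)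
        + ∫ ω, ⟪f' (x t ω) - g t ω, x t ω - xstar⟫ ∂P
        + ((1/(2*lam)) * (∫ ω, ‖g t ω - f' (x t ω)‖^2 ∂P)
          + (lam/2) * ∫ ω, ‖x (t+1) ω - x t ω‖^2 ∂P) := by
    have hAB : Integrable (fun ω =>
        (1/(2*α)) * (‖x t ω - xstar‖^2 - ‖x (t+1) ω - xstar‖^2 - ‖x (t+1) ω - x t ω‖^2)
        + ⟪f' (x t ω) - g t ω, x t ω - xstar⟫) P := hA.add hZint
    have huv : Integrable (fun ω => ‖x t ω - xstar‖^2 - ‖x (t+1) ω - xstar‖^2) P :=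
      hu2.sub hv2
    rw [integral_add hAB hC, integral_add hA hZint,
        integral_add (herr2.const_mul _) (hd2.const_mul _),
        integral_const_mul, integral_const_mul, integral_const_mul,
        integral_sub huv hd2, integral_sub hu2 hv2]
  rw [hsplit, hZ] at hle
  have hc : (0:ℝ) < 1/(2*lam) := by positivity
  have hIE' : (1/(2*lam)) * (∫ ω, ‖g t ω - f' (x t ω)‖^2 ∂P) ≤ (1/(2*lam)) * σ^2 :=
    mul_le_mul_of_nonneg_left hIE hc.le
  have hrw : σ^2/(2*lam) = (1/(2*lam)) * σ^2 := by ring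
  rw [hrw]
  linarith
end
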